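/- arXiv:2105.05009 — 7 statements merged into one kernel-verified Lean document; each statement's English description precedes it below -/
import Mathlib

section
/- If a sequence t : ℕ → ℚ satisfies t(0) = 1 and, for all n ≥ 1, ∑_{m=0}^{n} t(m)·t(n−m) = 1, then t(n) = C(2n, n)/4^n for all n. -/
open Finset

noncomputable def cb (n : ℕ) : ℚ := (Nat.choose (2 * n) n : ℚ) / 4 ^ n

lemma cb_zero : cb 0 = 1 := by simp [cb]

lemma cb_rec (n : ℕ) : ((n:ℚ) + 1) * cb (n + 1) = ((n:ℚ) + 1/2) * cb n := by
  have h := Nat.succ_mul_centralBinom_succ n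
  have h' : ((n:ℚ)+1) * (Nat.choose (2*(n+1)) (n+1) : ℚ)
      = 2*(2*(n:ℚ)+1) * (Nat.choose (2*n) n : ℚ) := by
    have := congrArg (fun k : ℕ => (k : ℚ)) h
    simp [Nat.centralBinom] at this
    convert this using 2
  unfold cb
  field_simp
  linear_combination (2 * (4:ℚ)^n) * h'

lemma cb_conv (n : ℕ) : ∑ m ∈ range (n + 1), cb m * cb (n - m) = 1 := by
  induction n with
  | zero => simp [cb_zero]
  | succ n ih =>
    have Tsym : ∀ N : ℕ, 2 * (∑ m ∈ range (N + 1), (m:ℚ) * cb m * cb (N - m))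
        = (N:ℚ) * ∑ m ∈ range (N + 1), cb m * cb (N - m) := by
      intro N
      have hr := Finset.sum_range_reflect (fun m => (m:ℚ) * cb m * cb (N - m)) (N+1)
      simp only [Nat.add_sub_cancel] at hr
      calc 2 * (∑ m ∈ range (N + 1), (m:ℚ) * cb m * cb (N - m))
          = (∑ m ∈ range (N + 1), (m:ℚ) * cb m * cb (N - m))
            + ∑ m ∈ range (N + 1), ((N - m : ℕ):ℚ) * cb (N - m) * cb (N - (N - m)) := by
            rw [hr]; ring
        _ = ∑ m ∈ range (N + 1), ((m:ℚ) + ((N - m : ℕ):ℚ)) * (cb m * cb (N - m)) := by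
            rw [← Finset.sum_add_distrib]
            apply Finset.sum_congr rfl
            intro m hm
            rw [Finset.mem_range] at hm
            have hmN : m ≤ N := Nat.lt_succ_iff.mp hm
            rw [Nat.sub_sub_self hmN]
            ring
        _ = (N:ℚ) * ∑ m ∈ range (N + 1), cb m * cb (N - m) := by
            rw [Finset.mul_sum]
            apply Finset.sum_congr rfl
            intro m hm
            rw [Finset.mem_range] at hm
            have hmN : m ≤ N := Nat.lt_succ_iff.mp hm
            rw [Nat.cast_sub hmN]
            ring
    have Tshift : ∑ m ∈ range (n + 2), (m:ℚ) * cb m * cb (n + 1 - m)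
        = (∑ m ∈ range (n + 1), (m:ℚ) * cb m * cb (n - m))
          + (∑ m ∈ range (n + 1), cb m * cb (n - m)) / 2 := by
      rw [Finset.sum_range_succ' (fun m => (m:ℚ) * cb m * cb (n + 1 - m)) (n+1)]
      simp only [Nat.cast_zero, zero_mul, zero_add, add_zero, mul_zero]
      have step : ∀ m ∈ range (n+1), ((m+1:ℕ):ℚ) * cb (m+1) * cb (n + 1 - (m+1))
          = ((m:ℚ) + 1/2) * cb m * cb (n - m) := by
        intro m hm
        have hsub : n + 1 - (m + 1) = n - m := by omega
        rw [hsub]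
        push_cast
        linear_combination cb (n - m) * cb_rec m
      rw [Finset.sum_congr rfl step]
      have expand : ∀ x ∈ range (n+1), ((x:ℚ) + 1/2) * cb x * cb (n - x)
          = (x:ℚ) * cb x * cb (n - x) + (cb x * cb (n - x)) / 2 := by
        intro x hx; ring
      rw [Finset.sum_congr rfl expand, Finset.sum_add_distrib, ← Finset.sum_div]
    have h1 := Tsym (n+1)
    have h2 := Tsym n
    rw [Tshift, ih] at h1
    rw [ih, mul_one] at h2
    have hne : ((n:ℚ) + 1) ≠ 0 := by positivity
    push_cast at h1
    have hkey : ((n:ℚ) + 1) * (∑ m ∈ range (n + 1 + 1), cb m * cb (n + 1 - m)) = ((n:ℚ)+1) * 1 := by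
      rw [mul_one]; linarith
    exact mul_left_cancel₀ hne hkey

/-- A sequence with t(0)=1 whose self-convolution is identically 1 must be C(2n,n)/4^n. -/
theorem convolution_unique (t : ℕ → ℚ) (h0 : t 0 = 1)
    (hconv : ∀ n : ℕ, 1 ≤ n → (∑ m ∈ Finset.range (n + 1), t m * t (n - m)) = 1) :
    ∀ n : ℕ, t n = (Nat.choose (2 * n) n : ℚ) / 4 ^ n := by
  have main : ∀ n, t n = cb n := by
    intro n
    induction n using Nat.strong_induction_on with
    | _ n ih =>
      match n, ih with
      | 0, _ => simpa [cb_zero] using h0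
      | (n+1), ih =>
        have hc := cb_conv (n+1)
        have ht := hconv (n+1) (by omega)
        have key : ∑ m ∈ range (n + 2), (t m * t (n + 1 - m) - cb m * cb (n + 1 - m))
            = 2 * (t (n+1) - cb (n+1)) := by
          rw [Finset.sum_range_succ' (fun m => t m * t (n + 1 - m) - cb m * cb (n + 1 - m)) (n+1)]
          rw [Finset.sum_range_succ]
          have hmid : ∀ m ∈ range n, t (m+1) * t (n + 1 - (m+1)) - cb (m+1) * cb (n + 1 - (m+1)) = 0 := by
            intro m hm
            rw [Finset.mem_range] at hm
            have h1 : t (m+1) = cb (m+1) := ih (m+1) (by omega)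
            have h2 : t (n + 1 - (m+1)) = cb (n + 1 - (m+1)) := ih _ (by omega)
            rw [h1, h2]; ring
          rw [Finset.sum_congr rfl hmid]
          simp only [Finset.sum_const_zero, zero_add]
          have hs1 : n + 1 - (n + 1) = 0 := by omega
          rw [hs1]
          simp [h0, cb_zero]
          ring
        rw [Finset.sum_sub_distrib, ht, hc] at key
        linarith
  intro n
  rw [main n]
  rfl
end

section
/- The sequence t(n) = C(2n,n)/4^n satisfies the recurrence t(n) = (1/2)·∑_{m=0}^{n-1} t(m)·t(n−1−m) − (1/2)·∑_{m=1}^{n-1} t(m)·t(n−m) for all n ≥ 1. -/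
/-- t(n) = C(2n,n)/4^n -/
noncomputable def t (n : ℕ) : ℚ := (Nat.choose (2 * n) n : ℚ) / 4 ^ n

lemma t_zero : t 0 = 1 := by simp [t]

lemma key (k : ℕ) : ((k : ℚ) + 1) * t (k + 1) = ((2 * k + 1) / 2) * t k := by
  have h := Nat.succ_mul_centralBinom_succ k
  have h' : ((k + 1) * Nat.centralBinom (k + 1) : ℚ)
      = (2 * (2 * k + 1) * Nat.centralBinom k : ℚ) := by exact_mod_cast congrArg (Nat.cast (R := ℚ)) h
  simp only [Nat.centralBinom] at h'
  have h2 : (2 * (k + 1)) = 2 * k + 2 := by ring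
  simp only [h2] at h'
  simp only [t, h2]
  have h4 : (4 : ℚ) ^ (k + 1) = 4 * 4 ^ k := by ring
  rw [h4]
  field_simp
  nlinarith [h', pow_pos (show (0:ℚ) < 4 by norm_num) k]

lemma sym (n : ℕ) :
    2 * ∑ m ∈ Finset.range (n + 1), (m : ℚ) * (t m * t (n - m))
      = n * ∑ m ∈ Finset.range (n + 1), t m * t (n - m) := by
  have hrefl := Finset.sum_range_reflect (fun m => (m : ℚ) * (t m * t (n - m))) (n + 1)
  have hflip : ∑ m ∈ Finset.range (n + 1), (m : ℚ) * (t m * t (n - m))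
      = ∑ m ∈ Finset.range (n + 1), ((n : ℚ) - m) * (t m * t (n - m)) := by
    rw [← hrefl]
    apply Finset.sum_congr rfl
    intro m hm
    have hm' : m ≤ n := Nat.lt_succ_iff.mp (Finset.mem_range.mp hm)
    have h1 : n + 1 - 1 - m = n - m := by omega
    have h2 : n - (n - m) = m := by omega
    rw [h1, h2, Nat.cast_sub hm']
    ring
  calc 2 * ∑ m ∈ Finset.range (n + 1), (m : ℚ) * (t m * t (n - m))
      = ∑ m ∈ Finset.range (n + 1), (m : ℚ) * (t m * t (n - m))
        + ∑ m ∈ Finset.range (n + 1), ((n : ℚ) - m) * (t m * t (n - m)) := by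
        rw [← hflip]; ring
    _ = ∑ m ∈ Finset.range (n + 1), (n : ℚ) * (t m * t (n - m)) := by
        rw [← Finset.sum_add_distrib]; apply Finset.sum_congr rfl; intro m _; ring
    _ = n * ∑ m ∈ Finset.range (n + 1), t m * t (n - m) := by
        rw [Finset.mul_sum]

lemma S_eq (n : ℕ) : ∑ m ∈ Finset.range (n + 1), t m * t (n - m) = 1 := by
  induction n with
  | zero => simp [t]
  | succ n ih =>
    -- T := ∑_{m=0}^{n+1} m * t m * t(n+1-m)
    have hT : ∑ m ∈ Finset.range (n + 2), (m : ℚ) * (t m * t (n + 1 - m))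
        = ((n : ℚ) + 1) / 2 * ∑ m ∈ Finset.range (n + 1), t m * t (n - m) := by
      rw [Finset.sum_range_succ']
      simp only [Nat.cast_zero, zero_mul, add_zero]
      have : ∑ m ∈ Finset.range (n + 1), ((m : ℚ) + 1) * (t (m + 1) * t (n - m))
          = ∑ m ∈ Finset.range (n + 1), ((2 * (m : ℚ) + 1) / 2) * (t m * t (n - m)) := by
        apply Finset.sum_congr rfl
        intro m _
        rw [show ((m : ℚ) + 1) * (t (m + 1) * t (n - m))
            = (((m : ℚ) + 1) * t (m + 1)) * t (n - m) by ring, key m]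
        ring
      push_cast
      rw [this]
      have hsum : ∑ m ∈ Finset.range (n + 1), ((2 * (m : ℚ) + 1) / 2) * (t m * t (n - m))
          = ∑ m ∈ Finset.range (n + 1), (m : ℚ) * (t m * t (n - m))
            + (1 / 2) * ∑ m ∈ Finset.range (n + 1), t m * t (n - m) := by
        rw [Finset.mul_sum, ← Finset.sum_add_distrib]
        apply Finset.sum_congr rfl; intro m _; ring
      rw [hsum]
      have := sym n
      linarith
    have hT2 := sym (n + 1)
    rw [ih] at hT
    rw [show ((n : ℕ) + 1 + 1) = n + 2 from rfl] at hT2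
    push_cast at hT2
    rw [hT] at hT2
    have hpos : (0 : ℚ) < (n : ℚ) + 1 := by positivity
    have : ((n : ℚ) + 1) * ∑ m ∈ Finset.range (n + 2), t m * t (n + 1 - m)
        = ((n : ℚ) + 1) * 1 := by rw [mul_one]; linarith
    exact mul_left_cancel₀ (ne_of_gt hpos) this

/-- Recurrence t(n) = ½∑_{m=0}^{n-1} t(m)t(n-1-m) − ½∑_{m=1}^{n-1} t(m)t(n-m). -/
theorem t_recurrence (n : ℕ) (hn : 1 ≤ n) :
    t n = (1 / 2) * (∑ m ∈ Finset.range n, t m * t (n - 1 - m))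
        - (1 / 2) * (∑ m ∈ Finset.Ico 1 n, t m * t (n - m)) := by
  obtain ⟨k, rfl⟩ : ∃ k, n = k + 1 := ⟨n - 1, by omega⟩
  have h1 : ∑ m ∈ Finset.range (k + 1), t m * t (k + 1 - 1 - m)
      = ∑ m ∈ Finset.range (k + 1), t m * t (k - m) := rfl
  have h2 : ∑ m ∈ Finset.range (k + 2), t m * t (k + 1 - m)
      = t 0 * t (k + 1) + (∑ m ∈ Finset.Ico 1 (k + 1), t m * t (k + 1 - m))
        + t (k + 1) * t 0 := by
    rw [Finset.range_eq_Ico, show k + 2 = (k + 1) + 1 from rfl,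
      Finset.sum_Ico_succ_top (by omega),
      Finset.sum_eq_sum_Ico_succ_bot (show 0 < k + 1 by omega) (fun m => t m * t (k + 1 - m))]
    simp
  have hS1 := S_eq k
  have hS2 := S_eq (k + 1)
  rw [show k + 1 + 1 = k + 2 from rfl] at hS2
  rw [h2, t_zero] at hS2
  rw [h1, hS1]
  linarith
end

section
/- t(n)·√(π n) tends to 1 as n → ∞, where t(n) = C(2n,n)/4^n. -/
open Filter Real Stirling Nat in
lemma t_key (n : ℕ) (hn : 1 ≤ n) :
    (Nat.choose (2 * n) n : ℝ) / 4 ^ n * Real.sqrt (Real.pi * n) =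
      stirlingSeq (2 * n) / (stirlingSeq n) ^ 2 * Real.sqrt Real.pi := by
  have hn0 : (0:ℝ) < n := by exact_mod_cast hn
  have hfact : ((2*n).choose n : ℝ) = (2*n)! / (n ! * n !) := by
    have := Nat.choose_mul_factorial_mul_factorial (show n ≤ 2*n by omega)
    rw [show 2*n - n = n by omega] at this
    field_simp
    rw [sq, ← mul_assoc]
    exact_mod_cast congrArg Nat.cast this
  rw [hfact]
  unfold stirlingSeq
  have he : (0:ℝ) < Real.exp 1 := Real.exp_pos 1
  have hs2n : (0:ℝ) < Real.sqrt (2 * (2*n)) := Real.sqrt_pos.2 (by positivity)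
  have hsn : (0:ℝ) < Real.sqrt (2 * n) := Real.sqrt_pos.2 (by positivity)
  have hfn : (0:ℝ) < (n)! := by exact_mod_cast Nat.factorial_pos n
  have hsq : Real.sqrt (2 * (2*(n:ℝ))) = 2 * Real.sqrt n := by
    rw [show (2:ℝ) * (2*n) = 4 * n by ring, show (4:ℝ)*n = 2^2 * n by norm_num,
      Real.sqrt_mul (by positivity), Real.sqrt_sq (by norm_num)]
  have hsq2 : Real.sqrt (2 * (n:ℝ)) ^ 2 = 2 * n := Real.sq_sqrt (by positivity)
  have hpn : Real.sqrt (Real.pi * n) = Real.sqrt Real.pi * Real.sqrt n :=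
    Real.sqrt_mul Real.pi_pos.le _
  have hpow : ((2*(n:ℝ)) / Real.exp 1) ^ (2*n) = 4^n * ((n / Real.exp 1) ^ n)^2 := by
    rw [div_pow, div_pow, div_pow, ← pow_mul, mul_pow]
    rw [show ((2:ℝ))^(2*n) = 4^n by rw [pow_mul]; norm_num]
    ring
  push_cast
  rw [hpow, hsq, hpn]
  simp only [div_pow, mul_pow]
  rw [hsq2]
  have hsn' : (0:ℝ) < Real.sqrt n := Real.sqrt_pos.2 hn0
  have hss : √(n:ℝ) * √(n:ℝ) = n := Real.mul_self_sqrt hn0.le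
  field_simp
  linear_combination hss

open Filter in
/-- t(n)·√(πn) → 1 as n → ∞, where t(n) = C(2n,n)/4^n. -/
theorem t_asymptotic :
    Tendsto (fun n : ℕ => (Nat.choose (2 * n) n : ℝ) / 4 ^ n * Real.sqrt (Real.pi * n))
      atTop (nhds 1) := by
  have h2n : Tendsto (fun n : ℕ => Stirling.stirlingSeq (2 * n)) atTop (nhds (Real.sqrt Real.pi)) :=
    Stirling.tendsto_stirlingSeq_sqrt_pi.comp
      (tendsto_atTop_mono (fun n => by omega : ∀ n : ℕ, n ≤ 2 * n) tendsto_id)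
  have h : Tendsto (fun n : ℕ => Stirling.stirlingSeq (2 * n) / (Stirling.stirlingSeq n) ^ 2
      * Real.sqrt Real.pi) atTop (nhds 1) := by
    have := (h2n.div (Stirling.tendsto_stirlingSeq_sqrt_pi.pow 2)
      (by positivity)).mul_const (Real.sqrt Real.pi)
    convert this using 2
    · rfl
    rw [Real.sq_sqrt Real.pi_pos.le]
    rw [div_mul_eq_mul_div, Real.mul_self_sqrt Real.pi_pos.le, div_self Real.pi_pos.ne']
  refine h.congr' ?_
  filter_upwards [eventually_ge_atTop 1] with n hn
  exact (t_key n hn).symm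
end

section
/- The number of distinct strings of positive integers z with T(z) − L(z) + L(z) ≤ n that can occur as the initial segment (before the first zero) of a convex Bloch sequence of order n equals 2^n − n. -/
/-- A convex Bloch sequence of order n, as a list: length n, sum n, and
every partial sum of the first p entries (1 ≤ p ≤ n-1) is at least p. -/
def IsConvexBloch (n : ℕ) (K : List ℕ) : Prop :=
  K.length = n ∧ K.sum = n ∧ ∀ p : ℕ, 1 ≤ p → p ≤ n - 1 → p ≤ (K.take p).sum

/- ### Auxiliary lemmas -/

private lemma takeWhile_pos_append (z t : List ℕ) (h : ∀ x ∈ z, x ≠ 0) :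
    (z ++ 0 :: t).takeWhile (fun x => x ≠ 0) = z := by
  induction z with
  | nil => simp [List.takeWhile_cons]
  | cons a s ih =>
    have ha : a ≠ 0 := h a (by simp)
    have ih' := ih (fun x hx => h x (by simp [hx]))
    simp only [List.cons_append]
    simpa [List.takeWhile_cons, ha] using ih' 

private lemma takeWhile_pos_self (z : List ℕ) (h : ∀ x ∈ z, x ≠ 0) :
    z.takeWhile (fun x => x ≠ 0) = z :=
  List.takeWhile_eq_self_iff.2 (by intro x hx; simpa using h x hx)

private lemma sum_le_sum_take (A B : List ℕ) (p : ℕ) (h : A.length ≤ p) :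
    A.sum ≤ ((A ++ B).take p).sum := by
  rw [List.take_append, List.take_of_length_le h, List.sum_append]
  exact Nat.le_add_right _ _

private lemma take_sum_le_take_append (A B : List ℕ) (p : ℕ) :
    (A.take p).sum ≤ ((A ++ B).take p).sum := by
  rw [List.take_append, List.sum_append]
  exact Nat.le_add_right _ _

private lemma le_sum_take_of_pos (z : List ℕ) (h : ∀ x ∈ z, x ≠ 0) (p : ℕ)
    (hp : p ≤ z.length) : p ≤ (z.take p).sum := by
  have h1 : (z.take p).length ≤ (z.take p).sum :=
    List.length_le_sum_of_one_le _
      (fun i hi => Nat.one_le_iff_ne_zero.2 (h i (List.mem_of_mem_take hi)))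
  rwa [List.length_take, min_eq_left hp] at h1

private lemma take_succ_length (z t : List ℕ) :
    ((z ++ 0 :: t).take (z.length + 1)).sum = z.sum := by
  rw [List.take_append, List.take_of_length_le (by omega)]
  have : z.length + 1 - z.length = 1 := by omega
  rw [this]
  simp

private lemma eq_replicate_of_sum_le_length (l : List ℕ) (hpos : ∀ x ∈ l, 0 < x)
    (h : l.sum ≤ l.length) : l = List.replicate l.length 1 := by
  induction l with
  | nil => simp
  | cons a t ih =>
    have ha : 0 < a := hpos a (by simp)
    have ht : t.length ≤ t.sum :=
      List.length_le_sum_of_one_le _ (fun i hi => hpos i (by simp [hi]))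
    simp only [List.sum_cons, List.length_cons] at h ⊢
    have ha1 : a = 1 := by omega
    have := ih (fun x hx => hpos x (by simp [hx])) (by omega)
    rw [List.replicate_succ, ha1, ← this]

private lemma sum_two_pow (n : ℕ) : ∑ i ∈ Finset.range n, 2 ^ i = 2 ^ n - 1 := by
  induction n with
  | zero => simp
  | succ n ih =>
    rw [Finset.sum_range_succ, ih, pow_succ]
    have : 1 ≤ 2 ^ n := Nat.one_le_two_pow
    omega

/-- Characterization of the initial strings. -/
private lemma initial_string_iff (n : ℕ) (hn : 1 ≤ n) (z : List ℕ) :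
    (∃ K : List ℕ, IsConvexBloch n K ∧ z = K.takeWhile (fun x => x ≠ 0)) ↔
      (∀ x ∈ z, 0 < x) ∧ z.sum ≤ n ∧ (z.sum = n ∨ z.length < z.sum) := by
  constructor
  · rintro ⟨K, ⟨hlen, hsum, hpart⟩, rfl⟩
    set z := K.takeWhile (fun x => x ≠ 0) with hz
    have hpos : ∀ x ∈ z, 0 < x := by
      intro x hx
      have := List.mem_takeWhile_imp hx
      simp at this
      omega
    have hKz : z ++ K.dropWhile (fun x => x ≠ 0) = K :=
      List.takeWhile_append_dropWhile ..
    refine ⟨hpos, ?_, ?_⟩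
    · have : z.sum + (K.dropWhile (fun x => x ≠ 0)).sum = n := by
        rw [← List.sum_append, hKz, hsum]
      omega
    · rcases hd : K.dropWhile (fun x => x ≠ 0) with _ | ⟨b, t⟩
      · left
        rw [hd] at hKz
        simp at hKz
        rw [hKz, hsum]
      · have hb : b = 0 := by
          have hW := List.head_dropWhile_not (fun x => (x ≠ 0 : Bool)) (l := K)
            (by rw [hd]; simp)
          simp only [hd] at hW
          by_contra hb0
          simp [hb0] at hW
        subst hb
        rcases t with _ | ⟨c, t'⟩
        · left
          rw [hd] at hKz
          have : z.sum + 0 = n := by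
            rw [← hsum, ← hKz]; simp
          omega
        · right
          rw [hd] at hKz
          have hlen' : z.length + (2 + t'.length) = n := by
            rw [← hlen, ← hKz]; simp; omega
          have h1 : 1 ≤ z.length + 1 := by omega
          have h2 : z.length + 1 ≤ n - 1 := by omega
          have := hpart (z.length + 1) h1 h2
          rw [← hKz, take_succ_length] at this
          omega
  · rintro ⟨hpos, hle, hor⟩
    have hpos' : ∀ x ∈ z, x ≠ 0 := fun x hx => Nat.pos_iff_ne_zero.1 (hpos x hx)
    have hlz : z.length ≤ z.sum :=
      List.length_le_sum_of_one_le _ (fun i hi => hpos i hi)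
    by_cases hsn : z.sum = n
    · -- z.sum = n : pad with zeros
      refine ⟨z ++ List.replicate (n - z.length) 0, ⟨?_, ?_, ?_⟩, ?_⟩
      · simp; omega
      · simp [hsn]
      · intro p hp1 hp2
        by_cases hcase : p ≤ z.length
        · exact le_trans (le_sum_take_of_pos z hpos' p hcase)
            (take_sum_le_take_append _ _ _)
        · have : z.sum ≤ ((z ++ List.replicate (n - z.length) 0).take p).sum :=
            sum_le_sum_take _ _ _ (by omega)
          omega
      · rcases hrep : n - z.length with _ | m
        · simpa using (takeWhile_pos_self z hpos').symm
        · rw [List.replicate_succ]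
          exact (takeWhile_pos_append z _ hpos').symm
    · -- z.length < z.sum < n
      have hls : z.length < z.sum := by
        rcases hor with h | h
        · exact absurd h hsn
        · exact h
      have hslt : z.sum < n := lt_of_le_of_ne hle hsn
      refine ⟨z ++ 0 :: (n - z.sum) :: List.replicate (n - z.length - 2) 0,
        ⟨?_, ?_, ?_⟩, ?_⟩
      · simp; omega
      · simp; omega
      · intro p hp1 hp2
        by_cases hc1 : p ≤ z.length
        · exact le_trans (le_sum_take_of_pos z hpos' p hc1)
            (take_sum_le_take_append _ _ _)
        · by_cases hc2 : p = z.length + 1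
          · subst hc2
            rw [take_succ_length]
            omega
          · -- p ≥ z.length + 2
            have hshape : z ++ 0 :: (n - z.sum) :: List.replicate (n - z.length - 2) 0
                = (z ++ [0, n - z.sum]) ++ List.replicate (n - z.length - 2) 0 := by
              simp
            rw [hshape]
            have : (z ++ [0, n - z.sum]).sum ≤
                (((z ++ [0, n - z.sum]) ++ List.replicate (n - z.length - 2) 0).take p).sum :=
              sum_le_sum_take _ _ _ (by simp; omega)
            simp only [List.sum_append, List.sum_cons, List.sum_nil] at this
            omega
      · exact (takeWhile_pos_append z _ hpos').symm

/-- The number of distinct initial strings of positive integers (the maximal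
prefix before the first zero) occurring among convex Bloch sequences of order n
equals 2^n - n. -/
theorem card_initial_strings (n : ℕ) (hn : 1 ≤ n) :
    {z : List ℕ | ∃ K : List ℕ, IsConvexBloch n K ∧
        z = K.takeWhile (fun x => x ≠ 0)}.ncard = 2 ^ n - n := by
  classical
  set F : Finset (List ℕ) :=
    ((Finset.range n).biUnion fun m =>
        Finset.univ.image (fun c : Composition (m + 1) => c.blocks)) \
      ((Finset.range (n - 1)).image fun k => List.replicate (k + 1) 1) with hF
  have hset : {z : List ℕ | ∃ K : List ℕ, IsConvexBloch n K ∧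
      z = K.takeWhile (fun x => x ≠ 0)} = ↑F := by
    ext z
    rw [Set.mem_setOf_eq, initial_string_iff n hn z]
    simp only [hF, Finset.coe_sdiff, Set.mem_diff, Finset.coe_biUnion,
      Finset.mem_coe, Finset.mem_biUnion, Finset.mem_range, Finset.mem_image,
      Finset.mem_univ, true_and, Set.mem_iUnion, Finset.coe_image, Set.mem_image]
    constructor
    · rintro ⟨hpos, hle, hor⟩
      have hsum1 : 1 ≤ z.sum := by
        rcases hor with h | h <;> omega
      refine ⟨⟨z.sum - 1, by omega, ⟨z, fun hi => hpos _ hi, by omega⟩, rfl⟩, ?_⟩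
      rintro ⟨k, hk, hrep⟩
      have hs : z.sum = k + 1 := by rw [← hrep]; simp
      have hl : z.length = k + 1 := by rw [← hrep]; simp
      rcases hor with h | h <;> omega
    · rintro ⟨⟨m, hm, c, rfl⟩, hnrep⟩
      have hpos : ∀ x ∈ c.blocks, 0 < x := fun x hx => c.blocks_pos hx
      have hsum : c.blocks.sum = m + 1 := c.blocks_sum
      refine ⟨hpos, by omega, ?_⟩
      by_contra hcon
      push_neg at hcon
      obtain ⟨hne, hge⟩ := hcon
      have hlz : c.blocks.length ≤ c.blocks.sum :=
        List.length_le_sum_of_one_le _ (fun i hi => hpos i hi)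
      have heq : c.blocks.length = c.blocks.sum := by omega
      have hrep := eq_replicate_of_sum_le_length c.blocks hpos (by omega)
      exact hnrep ⟨c.blocks.length - 1, by omega,
        by rw [show c.blocks.length - 1 + 1 = c.blocks.length by omega]; exact hrep.symm⟩
  rw [hset, Set.ncard_coe_finset]
  -- cardinality computation
  have hdisj : ∀ x ∈ Finset.range n, ∀ y ∈ Finset.range n, x ≠ y →
      Disjoint (Finset.univ.image (fun c : Composition (x + 1) => c.blocks))
        (Finset.univ.image (fun c : Composition (y + 1) => c.blocks)) := by
    intro x _ y _ hxy
    rw [Finset.disjoint_left]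
    rintro a ha hb
    simp only [Finset.mem_image, Finset.mem_univ, true_and] at ha hb
    obtain ⟨cx, hcx⟩ := ha
    obtain ⟨cy, hcy⟩ := hb
    have h1 : a.sum = x + 1 := by rw [← hcx]; exact cx.blocks_sum
    have h2 : a.sum = y + 1 := by rw [← hcy]; exact cy.blocks_sum
    omega
  have hcard_union :
      ((Finset.range n).biUnion fun m =>
        Finset.univ.image (fun c : Composition (m + 1) => c.blocks)).card = 2 ^ n - 1 := by
    rw [Finset.card_biUnion hdisj]
    have : ∀ m : ℕ, (Finset.univ.image (fun c : Composition (m + 1) => c.blocks)).card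
        = 2 ^ m := by
      intro m
      rw [Finset.card_image_of_injective _ (fun a b h => Composition.ext h),
        Finset.card_univ, composition_card]
      simp
    simp only [this]
    exact sum_two_pow n
  have hsub : ((Finset.range (n - 1)).image fun k => List.replicate (k + 1) 1) ⊆
      ((Finset.range n).biUnion fun m =>
        Finset.univ.image (fun c : Composition (m + 1) => c.blocks)) := by
    intro a ha
    simp only [Finset.mem_image, Finset.mem_range] at ha
    obtain ⟨k, hk, rfl⟩ := ha
    simp only [Finset.mem_biUnion, Finset.mem_range, Finset.mem_image, Finset.mem_univ,
      true_and]
    exact ⟨k, by omega, Composition.ones (k + 1), Composition.ones_blocks _⟩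
  have hcard_rep : ((Finset.range (n - 1)).image fun k => List.replicate (k + 1) 1).card
      = n - 1 := by
    rw [Finset.card_image_of_injective, Finset.card_range]
    intro a b h
    have := congrArg List.length h
    simpa using this
  rw [hF, Finset.card_sdiff_of_subset hsub, hcard_union, hcard_rep]
  have := Nat.lt_two_pow_self (n := n)
  omega
end

section
/- For Bloch sequences with crossing numbers N_1, n_1, …, N_m, n_m (where N_1, n_m ≥ 0 and all other N_i, n_i ≥ 1), the minimal possible order n of such a sequence satisfies m ≤ n/3 + 1. -/
/-- Partial sum K_p = k_1 + ⋯ + k_p of a Bloch sequence given as a list. -/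
def psum (l : List ℕ) (p : ℕ) : ℕ := (l.take p).sum

/-- The staircase path crosses above the upper diagonal at step i. -/
def UpCross (l : List ℕ) (i : ℕ) : Prop :=
  1 ≤ i ∧ i ≤ l.length ∧ i < psum l i ∧ psum l (i - 1) ≤ i - 1

/-- The staircase path crosses below the main diagonal at step i. -/
def DownCross (l : List ℕ) (i : ℕ) : Prop :=
  1 ≤ i ∧ i ≤ l.length ∧ psum l i < i ∧ i - 1 ≤ psum l (i - 1)

lemma psum_mono (l : List ℕ) {a b : ℕ} (h : a ≤ b) : psum l a ≤ psum l b := by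
  unfold psum
  have : b = a + (b - a) := by omega
  rw [this, List.take_add, List.sum_append]
  omega

lemma psum_len (l : List ℕ) : psum l l.length = l.sum := by
  simp [psum]

/-- If a Bloch sequence of order n has crossing numbers N_1,n_1,…,N_m,n_m
(so each of the m-1 intermediate blocks contains a down-crossing followed by an
up-crossing of the next block, interleaved in order), then m ≤ n/3 + 1. -/
theorem crossing_blocks_bound (n m : ℕ) (hm : 1 ≤ m) (l : List ℕ)
    (hlen : l.length = n) (hsum : l.sum = n)
    (d u : ℕ → ℕ)
    (hd : ∀ i : ℕ, 1 ≤ i → i ≤ m - 1 → DownCross l (d i))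
    (hu : ∀ i : ℕ, 2 ≤ i → i ≤ m → UpCross l (u i))
    (hdu : ∀ i : ℕ, 1 ≤ i → i ≤ m - 1 → d i < u (i + 1))
    (hud : ∀ i : ℕ, 2 ≤ i → i ≤ m - 1 → u i < d i) :
    (m : ℚ) ≤ (n : ℚ) / 3 + 1 := by
  rcases Nat.eq_or_lt_of_le hm with h1 | h2
  · -- m = 1
    rw [← h1]
    have : (0:ℚ) ≤ (n:ℚ) := by positivity
    linarith
  · -- m ≥ 2
    have key : 3 * (m - 1) ≤ n := by
      -- step bound: for 1 ≤ i ≤ m-1, 3 * i ≤ d i + 2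
      have step : ∀ i : ℕ, 1 ≤ i → i ≤ m - 1 → 3 * i ≤ d i + 2 := by
        intro i
        induction i with
        | zero => omega
        | succ j ih =>
          intro _ hle
          rcases Nat.eq_zero_or_pos j with hj | hj
          · subst hj
            have h := (hd 1 le_rfl (by omega)).1
            simpa using h
          · -- j ≥ 1, so d j exists, u (j+1), d (j+1)
            have hdj := hd j hj (by omega)
            have huj := hu (j+1) (by omega) (by omega)
            have hdj1 := hd (j+1) (by omega) hle
            have h1 := hdu j hj (by omega)
            have h2 := hud (j+1) (by omega) hle
            -- psum (u (j+1)) > u (j+1), psum (d (j+1)) < d (j+1),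
            -- monotone ⇒ d (j+1) ≥ u (j+1) + 2 ≥ d j + 3
            have hmono : psum l (u (j+1)) ≤ psum l (d (j+1)) :=
              psum_mono l (le_of_lt h2)
            have := ih hj (by omega)
            obtain ⟨_, _, hup, _⟩ := huj
            obtain ⟨_, _, hdn, _⟩ := hdj1
            omega
      have hdm := step (m-1) (by omega) le_rfl
      have hum := hu m (by omega) le_rfl
      have hdum := hdu (m-1) (by omega) le_rfl
      have hmeq : m - 1 + 1 = m := by omega
      rw [hmeq] at hdum
      obtain ⟨_, hle, hup, _⟩ := hum
      -- psum (u m) ≥ u m + 1 and psum n = n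
      have hmono : psum l (u m) ≤ psum l l.length := psum_mono l hle
      rw [psum_len, hsum] at hmono
      omega
    have h3 : (3:ℚ) * ((m:ℚ) - 1) ≤ (n:ℚ) := by
      have : ((3 * (m-1) : ℕ) : ℚ) ≤ (n:ℚ) := by exact_mod_cast key
      push_cast [Nat.cast_sub hm] at this
      linarith
    linarith
end

section
/- For t(n) = C(2n,n)/4^n and any integers a ≥ 1: ∑_{k=0}^{a−1} t(k)·t(a−1−k) = 1, and consequently ∑_{k=1}^{a} t(k)·t(a−k) = 1 − t(a), since the k = 0 term contributes t(0)t(a) = t(a). -/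
lemma t_rec (k : ℕ) : ((k : ℚ) + 1) * t (k + 1) = ((k : ℚ) + 1/2) * t k := by
  have h := Nat.succ_mul_centralBinom_succ k
  have h' : ((k+1) * Nat.centralBinom (k+1) : ℚ) = (2 * (2*k+1) * Nat.centralBinom k : ℚ) := by
    exact_mod_cast congrArg (Nat.cast : ℕ → ℚ) h
  simp only [Nat.centralBinom] at h'
  simp only [t]
  push_cast at h' ⊢
  have h4 : ((4:ℚ) ^ (k+1)) ≠ 0 := by positivity
  have h4' : ((4:ℚ) ^ k) ≠ 0 := by positivity
  field_simp
  ring_nf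
  ring_nf at h'
  linear_combination (2 * (4:ℚ)^k) * h'

noncomputable def f (m : ℕ) : ℚ := ∑ k ∈ Finset.range (m+1), t k * t (m - k)

lemma f_symm_coef (m : ℕ) (g : ℕ → ℚ) :
    ∑ k ∈ Finset.range (m+1), g k * (t k * t (m - k))
      = ∑ k ∈ Finset.range (m+1), g (m - k) * (t k * t (m - k)) := by
  rw [← Finset.sum_range_reflect]
  apply Finset.sum_congr rfl
  intro k hk
  simp only [Finset.mem_range] at hk
  have hk' : k ≤ m := by omega
  have e : m + 1 - 1 - k = m - k := by omega
  rw [e, Nat.sub_sub_self hk']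
  ring

lemma f_succ (m : ℕ) : f (m + 1) = f m := by
  classical
  set A : ℚ := ∑ k ∈ Finset.range (m+2), (k : ℚ) * (t k * t (m+1-k)) with hA
  have hsym := f_symm_coef (m+1) (fun k => (k : ℚ))
  have h2A : 2 * A = ((m:ℚ) + 1) * f (m+1) := by
    have c1 : ∑ k ∈ Finset.range (m+2), ((k:ℚ) + ((m+1-k : ℕ) : ℚ)) * (t k * t (m+1-k))
        = 2 * A := by
      calc ∑ k ∈ Finset.range (m+2), ((k:ℚ) + ((m+1-k : ℕ) : ℚ)) * (t k * t (m+1-k))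
          = ∑ k ∈ Finset.range (m+2), ((k:ℚ) * (t k * t (m+1-k))
              + ((m+1-k : ℕ) : ℚ) * (t k * t (m+1-k))) := by
            apply Finset.sum_congr rfl; intros; ring
        _ = (∑ k ∈ Finset.range (m+2), (k:ℚ) * (t k * t (m+1-k)))
              + ∑ k ∈ Finset.range (m+2), ((m+1-k : ℕ) : ℚ) * (t k * t (m+1-k)) :=
            Finset.sum_add_distrib
        _ = A + A := by rw [← hA]; rw [show (m+2) = (m+1)+1 from rfl] at *; rw [← hsym]
        _ = 2 * A := by ring
    rw [← c1]
    unfold f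
    rw [Finset.mul_sum]
    apply Finset.sum_congr rfl
    intro k hk
    simp only [Finset.mem_range] at hk
    have hk' : k ≤ m + 1 := by omega
    have : ((m+1-k : ℕ) : ℚ) = (m:ℚ) + 1 - k := by
      rw [Nat.cast_sub hk']; push_cast; ring
    rw [this]; ring
  have hAval : A = ((m:ℚ) + 1) / 2 * f m := by
    have hpeel : A = ∑ i ∈ Finset.range (m+1), ((i:ℚ)+1) * (t (i+1) * t (m - i)) := by
      rw [hA, Finset.sum_range_succ']
      simp only [Nat.cast_zero, zero_mul, add_zero]
      apply Finset.sum_congr rfl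
      intro i hi
      have e : m + 1 - (i + 1) = m - i := by omega
      rw [e]
      push_cast
      ring
    have hrec : ∀ i : ℕ, ((i:ℚ)+1) * (t (i+1) * t (m-i)) = ((i:ℚ)+1/2) * (t i * t (m-i)) := by
      intro i
      have h := t_rec i
      calc ((i:ℚ)+1) * (t (i+1) * t (m-i)) = (((i:ℚ)+1) * t (i+1)) * t (m-i) := by ring
        _ = (((i:ℚ)+1/2) * t i) * t (m-i) := by rw [h]
        _ = ((i:ℚ)+1/2) * (t i * t (m-i)) := by ring
    rw [hpeel]
    simp_rw [hrec]
    have hsym' := f_symm_coef m (fun k => (k:ℚ))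
    have hB : ∑ i ∈ Finset.range (m+1), (i:ℚ) * (t i * t (m-i)) = (m:ℚ)/2 * f m := by
      have h2 : 2 * (∑ i ∈ Finset.range (m+1), (i:ℚ) * (t i * t (m-i))) = (m:ℚ) * f m := by
        have c2 : ∑ k ∈ Finset.range (m+1), ((k:ℚ) + ((m-k : ℕ) : ℚ)) * (t k * t (m-k))
            = 2 * ∑ i ∈ Finset.range (m+1), (i:ℚ) * (t i * t (m-i)) := by
          calc ∑ k ∈ Finset.range (m+1), ((k:ℚ) + ((m-k : ℕ) : ℚ)) * (t k * t (m-k))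
              = ∑ k ∈ Finset.range (m+1), ((k:ℚ) * (t k * t (m-k))
                  + ((m-k : ℕ) : ℚ) * (t k * t (m-k))) := by
                apply Finset.sum_congr rfl; intros; ring
            _ = (∑ k ∈ Finset.range (m+1), (k:ℚ) * (t k * t (m-k)))
                  + ∑ k ∈ Finset.range (m+1), ((m-k : ℕ) : ℚ) * (t k * t (m-k)) :=
                Finset.sum_add_distrib
            _ = _ := by rw [← hsym']; ring
        rw [← c2]
        unfold f
        rw [Finset.mul_sum]
        apply Finset.sum_congr rfl
        intro k hk
        simp only [Finset.mem_range] at hk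
        have hk' : k ≤ m := by omega
        have : ((m-k : ℕ) : ℚ) = (m:ℚ) - k := by rw [Nat.cast_sub hk']
        rw [this]; ring
      linarith
    have hsplit : ∑ i ∈ Finset.range (m+1), ((i:ℚ)+1/2) * (t i * t (m-i))
        = (∑ i ∈ Finset.range (m+1), (i:ℚ) * (t i * t (m-i))) + (1/2) * f m := by
      unfold f
      rw [Finset.mul_sum, ← Finset.sum_add_distrib]
      apply Finset.sum_congr rfl
      intros; ring
    rw [hsplit, hB]; ring
  have hm : ((m:ℚ) + 1) ≠ 0 := by positivity
  have : ((m:ℚ)+1) * f (m+1) = ((m:ℚ)+1) * f m := by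
    rw [← h2A, hAval]; ring
  exact mul_left_cancel₀ hm this

lemma f_eq_one (m : ℕ) : f m = 1 := by
  induction m with
  | zero => simp [f, t_zero]
  | succ n ih => rw [f_succ]; exact ih

/-- For a ≥ 1: ∑_{k=0}^{a-1} t(k)t(a-1-k) = 1 and ∑_{k=1}^{a} t(k)t(a-k) = 1 − t(a). -/
theorem conv_shift (a : ℕ) (ha : 1 ≤ a) :
    (∑ k ∈ Finset.range a, t k * t (a - 1 - k)) = 1 ∧
    (∑ k ∈ Finset.Icc 1 a, t k * t (a - k)) = 1 - t a := by
  obtain ⟨n, rfl⟩ : ∃ n, a = n + 1 := ⟨a - 1, by omega⟩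
  constructor
  · have h := f_eq_one n
    unfold f at h
    rw [← h]
    apply Finset.sum_congr rfl
    intro k hk
    have e : n + 1 - 1 - k = n - k := by omega
    rw [e]
  · have h1 := f_eq_one (n+1)
    unfold f at h1
    rw [Finset.sum_range_succ'] at h1
    simp only [Nat.sub_zero, t_zero, one_mul] at h1
    have hIcc : ∑ k ∈ Finset.Icc 1 (n+1), t k * t (n+1-k)
        = ∑ i ∈ Finset.range (n+1), t (i+1) * t (n+1-(i+1)) := by
      rw [← Finset.Ico_add_one_right_eq_Icc, Finset.sum_Ico_eq_sum_range]
      apply Finset.sum_congr (by congr 1)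
      intro i _
      rw [add_comm 1 i]
    rw [hIcc]
    linarith [h1]
end

section
/- For every n ≥ 1, 2^n − n ≤ Catalan number C_n, i.e. the Salzman lower bound on distinct operator groups within convex diagrams does not exceed the total number of convex diagrams. -/
lemma aux_pow (n : ℕ) (hn : 10 ≤ n) : n * (n + 1) ≤ 2 ^ n := by
  induction n with
  | zero => omega
  | succ k ih =>
    rcases Nat.lt_or_ge k 10 with hk | hk
    · have : k = 9 := by omega
      subst this; norm_num
    · have := ih (by omega)
      have hk2 : (1024:ℕ) ≤ 2 ^ k := by
        calc (1024:ℕ) = 2 ^ 10 := by norm_num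
          _ ≤ 2 ^ k := Nat.pow_le_pow_right (by norm_num) hk
      have h2 : 2 ^ (k + 1) = 2 * 2 ^ k := by ring
      nlinarith

/-- For n ≥ 1, the Salzman lower bound 2^n − n does not exceed the n-th Catalan number. -/
theorem salzman_le_catalan (n : ℕ) (hn : 1 ≤ n) : 2 ^ n - n ≤ catalan n := by
  rcases Nat.lt_or_ge n 10 with h | h
  · interval_cases n <;> (rw [catalan_eq_centralBinom_div]; decide)
  · have h1 : 4 ^ n < n * Nat.centralBinom n :=
      Nat.four_pow_lt_mul_centralBinom n (by omega)
    have h2 : (n + 1) * catalan n = Nat.centralBinom n :=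
      succ_mul_catalan_eq_centralBinom n
    have h3 : n * (n + 1) ≤ 2 ^ n := aux_pow n h
    have h4 : n * ((n + 1) * (2 ^ n - n)) ≤ n * ((n + 1) * catalan n) := by
      calc n * ((n + 1) * (2 ^ n - n))
          ≤ n * ((n + 1) * 2 ^ n) := by
            exact Nat.mul_le_mul_left _ (Nat.mul_le_mul_left _ (Nat.sub_le _ _))
        _ = (n * (n + 1)) * 2 ^ n := by ring
        _ ≤ 2 ^ n * 2 ^ n := Nat.mul_le_mul_right _ h3
        _ = 4 ^ n := by rw [← Nat.mul_pow]
        _ ≤ n * Nat.centralBinom n := h1.le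
        _ = n * ((n + 1) * catalan n) := by rw [h2]
    have h5 := Nat.le_of_mul_le_mul_left h4 (by omega)
    exact Nat.le_of_mul_le_mul_left h5 (by omega)
end
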